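/- Let M be an MPS tensor with physical dimension d and bond dimension D. The following are equivalent: (i) M is in minimal canonical form, i.e. ‖M‖ = inf{‖S‖ : S ∈ closure(GL(D,ℂ)·M)}; (ii) ‖g·M‖ ≥ ‖M‖ for every g ∈ GL(D,ℂ); (iii) ∑_{i=1}^d M^(i)(M^(i))† = ∑_{i=1}^d (M^(i))† M^(i). -/

import Mathlib

/-!
STATEMENT 0 (Characterization of the minimal canonical form for MPS).

Let `M` be an MPS tensor with physical dimension `d` and bond dimension `D`.
The following are equivalent:
(i)   `M` is in minimal canonical form, i.e. `‖M‖ = inf {‖S‖ : S ∈ closure (GL(D,ℂ)·M)}`;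
(ii)  `‖g·M‖ ≥ ‖M‖` for every `g ∈ GL(D,ℂ)`;
(iii) `∑ i, M i * (M i)ᴴ = ∑ i, (M i)ᴴ * M i`.
-/

open scoped BigOperators
open Matrix

noncomputable section

namespace MPS

/-- An MPS tensor: a `d`-tuple of complex `D × D` matrices. -/
abbrev MPSTensor (d D : ℕ) : Type := Fin d → Matrix (Fin D) (Fin D) ℂ

variable {d D : ℕ}

/-- The gauge action of `GL(D, ℂ)` by simultaneous conjugation. -/
def mact (g : GL (Fin D) ℂ) (M : MPSTensor d D) : MPSTensor d D :=
  fun i => (g : Matrix (Fin D) (Fin D) ℂ) * M i *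
    ((g⁻¹ : GL (Fin D) ℂ) : Matrix (Fin D) (Fin D) ℂ)

/-- The gauge orbit of an MPS tensor. -/
def orbit (M : MPSTensor d D) : Set (MPSTensor d D) :=
  { S | ∃ g : GL (Fin D) ℂ, S = mact g M }

/-- The square of the Frobenius (ℓ²) norm of an MPS tensor. -/
def mnormSq (M : MPSTensor d D) : ℝ := ∑ i, ∑ a, ∑ b, ‖M i a b‖ ^ 2

/-- The Frobenius (ℓ²) norm of an MPS tensor. -/
def mnorm (M : MPSTensor d D) : ℝ := Real.sqrt (mnormSq M)

end MPS

namespace MPS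

variable {d D : ℕ}

-- squared Frobenius norm of a single matrix
def sq1 (X : Matrix (Fin D) (Fin D) ℂ) : ℝ := ∑ a, ∑ b, ‖X a b‖ ^ 2

lemma sq1_eq_trace (X : Matrix (Fin D) (Fin D) ℂ) :
    sq1 X = (Matrix.trace (Xᴴ * X)).re := by
  simp only [Matrix.trace, Matrix.diag, Matrix.mul_apply, conjTranspose_apply,
    Complex.re_sum, sq1]
  rw [Finset.sum_comm]
  refine Finset.sum_congr rfl fun a _ => Finset.sum_congr rfl fun b _ => ?_
  rw [show (star (X b a) * X b a) = (((‖X b a‖ : ℂ))^2) from RCLike.conj_mul (X b a)]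
  norm_cast

lemma trace_diag_form (N : Matrix (Fin D) (Fin D) ℂ) (e f : Fin D → ℂ) :
    (Matrix.trace (Nᴴ * diagonal e * N * diagonal f)) =
      ∑ a, ∑ b, e a * f b * ((starRingEnd ℂ) (N a b) * N a b) := by
  simp only [Matrix.trace, Matrix.diag, Matrix.mul_apply, conjTranspose_apply,
    diagonal_apply]
  rw [show (∑ a : Fin D, ∑ b : Fin D, e a * f b * ((starRingEnd ℂ) (N a b) * N a b))
      = ∑ b : Fin D, ∑ a : Fin D, e a * f b * ((starRingEnd ℂ) (N a b) * N a b) from Finset.sum_comm]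
  refine Finset.sum_congr rfl fun c _ => ?_
  simp only [ite_mul, zero_mul, mul_ite, mul_zero, Finset.sum_ite_eq, Finset.sum_ite_eq',
    Finset.mem_univ, if_true]
  rw [Finset.sum_mul]
  refine Finset.sum_congr rfl fun a _ => ?_
  simp only [RCLike.star_def]
  ring


lemma key_single (X : Matrix (Fin D) (Fin D) ℂ) (g : GL (Fin D) ℂ)
    (u : Matrix (Fin D) (Fin D) ℂ) (hu1 : u * uᴴ = 1) (hu2 : uᴴ * u = 1)
    (p : Fin D → ℝ) (hp : ∀ a, p a ≠ 0)
    (hg : (↑g : Matrix (Fin D) (Fin D) ℂ)ᴴ * (↑g : Matrix (Fin D) (Fin D) ℂ)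
        = u * diagonal (fun a => (p a : ℂ)) * uᴴ) :
    sq1 ((↑g : Matrix (Fin D) (Fin D) ℂ) * X *
        ((g⁻¹ : GL (Fin D) ℂ) : Matrix (Fin D) (Fin D) ℂ))
      = ∑ a, ∑ b, (p a / p b) * ‖(uᴴ * X * u) a b‖ ^ 2 := by
  set G : Matrix (Fin D) (Fin D) ℂ := ↑g with hGdef
  set H : Matrix (Fin D) (Fin D) ℂ := ↑(g⁻¹) with hHdef
  have hGH : G * H = 1 := g.mul_inv
  have hHG : H * G = 1 := g.inv_mul
  set N : Matrix (Fin D) (Fin D) ℂ := uᴴ * X * u with hN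
  have hcol : ∀ Y : Matrix (Fin D) (Fin D) ℂ, uᴴ * (u * Y) = Y := by
    intro Y; rw [← Matrix.mul_assoc, hu2, Matrix.one_mul]
  have hcol2 : ∀ Y : Matrix (Fin D) (Fin D) ℂ, u * (uᴴ * Y) = Y := by
    intro Y; rw [← Matrix.mul_assoc, hu1, Matrix.one_mul]
  have hX : X = u * N * uᴴ := by
    rw [hN]
    simp only [Matrix.mul_assoc, hcol2]
    rw [hu1, Matrix.mul_one]
  have hdd : diagonal (fun a => (p a : ℂ)) * diagonal (fun a => ((p a : ℂ))⁻¹) = 1 := by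
    rw [diagonal_mul_diagonal]
    rw [show (fun a => (p a : ℂ) * ((p a : ℂ))⁻¹) = fun _ => (1 : ℂ) from
      funext fun a => mul_inv_cancel₀ (by exact_mod_cast hp a)]
    exact Matrix.diagonal_one
  have hPR : (Gᴴ * G) * (u * diagonal (fun a => ((p a : ℂ))⁻¹) * uᴴ) = 1 := by
    rw [hg]
    calc u * diagonal (fun a => (p a : ℂ)) * uᴴ * (u * diagonal (fun a => ((p a : ℂ))⁻¹) * uᴴ)
        = u * (diagonal (fun a => (p a : ℂ)) * (uᴴ * (u * (diagonal (fun a => ((p a : ℂ))⁻¹) * uᴴ)))) := by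
          simp only [Matrix.mul_assoc]
      _ = u * ((diagonal (fun a => (p a : ℂ)) * diagonal (fun a => ((p a : ℂ))⁻¹)) * uᴴ) := by
          rw [hcol, Matrix.mul_assoc]
      _ = 1 := by rw [hdd, Matrix.one_mul, hu1]
  have hQP : (H * Hᴴ) * (Gᴴ * G) = 1 := by
    have h1 : Hᴴ * Gᴴ = 1 := by rw [← conjTranspose_mul, hGH, conjTranspose_one]
    calc H * Hᴴ * (Gᴴ * G) = H * ((Hᴴ * Gᴴ) * G) := by simp only [Matrix.mul_assoc]
      _ = 1 := by rw [h1, Matrix.one_mul, hHG]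
  have hQ : H * Hᴴ = u * diagonal (fun a => ((p a : ℂ))⁻¹) * uᴴ := by
    calc H * Hᴴ = (H * Hᴴ) * ((Gᴴ * G) * (u * diagonal (fun a => ((p a : ℂ))⁻¹) * uᴴ)) := by
          rw [hPR, Matrix.mul_one]
      _ = ((H * Hᴴ) * (Gᴴ * G)) * (u * diagonal (fun a => ((p a : ℂ))⁻¹) * uᴴ) := by
          simp only [Matrix.mul_assoc]
      _ = _ := by rw [hQP, Matrix.one_mul]
  have tr_eq : Matrix.trace ((G * X * H)ᴴ * (G * X * H))
      = Matrix.trace (Nᴴ * diagonal (fun a => (p a : ℂ)) * N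
          * diagonal (fun a => ((p a : ℂ))⁻¹)) := by
    have e1 : (G * X * H)ᴴ * (G * X * H) = Hᴴ * (Xᴴ * (Gᴴ * G) * X) * H := by
      simp only [conjTranspose_mul, Matrix.mul_assoc]
    rw [e1, Matrix.trace_mul_cycle (Hᴴ) (Xᴴ * (Gᴴ * G) * X) H]
    have e2 : H * Hᴴ * (Xᴴ * (Gᴴ * G) * X)
        = u * (diagonal (fun a => ((p a : ℂ))⁻¹) * (Nᴴ * (diagonal (fun a => (p a : ℂ)) * N))) * uᴴ := by
      rw [hQ, hg, hX]
      simp only [conjTranspose_mul, conjTranspose_conjTranspose, Matrix.mul_assoc, hcol]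
    rw [e2, Matrix.trace_mul_cycle u _ uᴴ]
    rw [show uᴴ * u * (diagonal (fun a => ((p a : ℂ))⁻¹) * (Nᴴ * (diagonal (fun a => (p a : ℂ)) * N)))
        = diagonal (fun a => ((p a : ℂ))⁻¹) * (Nᴴ * (diagonal (fun a => (p a : ℂ)) * N)) from by
      rw [hu2, Matrix.one_mul]]
    rw [Matrix.trace_mul_comm]
    simp only [Matrix.mul_assoc]
  rw [sq1_eq_trace, tr_eq, trace_diag_form, Complex.re_sum]
  refine Finset.sum_congr rfl fun a _ => ?_
  rw [Complex.re_sum]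
  refine Finset.sum_congr rfl fun b _ => ?_
  rw [show ((starRingEnd ℂ) (N a b) * N a b) = ((‖N a b‖ : ℂ))^2 from RCLike.conj_mul _]
  have : (p a : ℂ) * ((p b : ℂ))⁻¹ * (‖N a b‖ : ℂ)^2
      = (((p a / p b) * ‖N a b‖^2 : ℝ) : ℂ) := by push_cast; ring
  rw [this, Complex.ofReal_re]

lemma key (M : MPSTensor d D) (g : GL (Fin D) ℂ)
    (u : Matrix (Fin D) (Fin D) ℂ) (hu1 : u * uᴴ = 1) (hu2 : uᴴ * u = 1)
    (p : Fin D → ℝ) (hp : ∀ a, p a ≠ 0)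
    (hg : (↑g : Matrix (Fin D) (Fin D) ℂ)ᴴ * (↑g : Matrix (Fin D) (Fin D) ℂ)
        = u * diagonal (fun a => (p a : ℂ)) * uᴴ) :
    mnormSq (mact g M) = ∑ a, ∑ b, (p a / p b) * ∑ i, ‖(uᴴ * M i * u) a b‖ ^ 2 := by
  have h1 : mnormSq (mact g M) = ∑ i, ∑ a, ∑ b, (p a / p b) * ‖(uᴴ * M i * u) a b‖ ^ 2 := by
    refine Finset.sum_congr rfl fun i _ => ?_
    exact key_single (M i) g u hu1 hu2 p hp hg
  rw [h1, Finset.sum_comm]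
  refine Finset.sum_congr rfl fun a _ => ?_
  rw [Finset.sum_comm]
  refine Finset.sum_congr rfl fun b _ => ?_
  rw [Finset.mul_sum]

lemma mnormSq_unitary (M : MPSTensor d D)
    (u : Matrix (Fin D) (Fin D) ℂ) (hu1 : u * uᴴ = 1) (hu2 : uᴴ * u = 1) :
    mnormSq M = ∑ a, ∑ b, ∑ i, ‖(uᴴ * M i * u) a b‖ ^ 2 := by
  have h := key M 1 u hu1 hu2 (fun _ => 1) (fun _ => one_ne_zero) ?_
  · have hM : mact (1 : GL (Fin D) ℂ) M = M := by
      funext i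
      simp [mact]
    rw [hM] at h
    simpa using h
  · simp only [Units.val_one, conjTranspose_one, Matrix.one_mul, Complex.ofReal_one]
    rw [Matrix.diagonal_one, Matrix.mul_one, hu1]

lemma row_sum_eq (N : Fin d → Matrix (Fin D) (Fin D) ℂ) (a : Fin D) :
    ((∑ i, N i * (N i)ᴴ) a a).re = ∑ b, ∑ i, ‖N i a b‖ ^ 2 := by
  simp only [Matrix.sum_apply, Matrix.mul_apply, conjTranspose_apply, Complex.re_sum]
  rw [Finset.sum_comm]
  refine Finset.sum_congr rfl fun b _ => Finset.sum_congr rfl fun i _ => ?_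
  rw [show N i a b * star (N i a b) = ((‖N i a b‖ : ℂ))^2 from RCLike.mul_conj _]
  norm_cast

lemma col_sum_eq (N : Fin d → Matrix (Fin D) (Fin D) ℂ) (a : Fin D) :
    ((∑ i, (N i)ᴴ * N i) a a).re = ∑ b, ∑ i, ‖N i b a‖ ^ 2 := by
  simp only [Matrix.sum_apply, Matrix.mul_apply, conjTranspose_apply, Complex.re_sum]
  rw [Finset.sum_comm]
  refine Finset.sum_congr rfl fun b _ => Finset.sum_congr rfl fun i _ => ?_
  rw [show star (N i b a) * N i b a = ((‖N i b a‖ : ℂ))^2 from RCLike.conj_mul _]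
  norm_cast

lemma conj_sum_comm (M : MPSTensor d D)
    (u : Matrix (Fin D) (Fin D) ℂ) (hu1 : u * uᴴ = 1) (hu2 : uᴴ * u = 1)
    (hiii : (∑ i, M i * (M i)ᴴ) = ∑ i, (M i)ᴴ * M i) :
    (∑ i, (uᴴ * M i * u) * (uᴴ * M i * u)ᴴ) = ∑ i, (uᴴ * M i * u)ᴴ * (uᴴ * M i * u) := by
  have hcol : ∀ Y : Matrix (Fin D) (Fin D) ℂ, u * (uᴴ * Y) = Y := by
    intro Y; rw [← Matrix.mul_assoc, hu1, Matrix.one_mul]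
  have e1 : ∀ X : Matrix (Fin D) (Fin D) ℂ,
      (uᴴ * X * u) * (uᴴ * X * u)ᴴ = uᴴ * (X * Xᴴ) * u := by
    intro X
    simp only [conjTranspose_mul, conjTranspose_conjTranspose, Matrix.mul_assoc, hcol]
  have e2 : ∀ X : Matrix (Fin D) (Fin D) ℂ,
      (uᴴ * X * u) * (uᴴ * X * u)ᴴ = uᴴ * (X * Xᴴ) * u := e1
  have e3 : ∀ X : Matrix (Fin D) (Fin D) ℂ,
      (uᴴ * X * u)ᴴ * (uᴴ * X * u) = uᴴ * (Xᴴ * X) * u := by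
    intro X
    simp only [conjTranspose_mul, conjTranspose_conjTranspose, Matrix.mul_assoc, hcol]
  simp only [e1, e3, ← Finset.sum_mul, ← Finset.mul_sum]
  rw [show (∑ i, M i * (M i)ᴴ) = ∑ i, (M i)ᴴ * M i from hiii]

lemma sq_le_of_comm (M : MPSTensor d D)
    (hiii : (∑ i, M i * (M i)ᴴ) = ∑ i, (M i)ᴴ * M i) (g : GL (Fin D) ℂ) :
    mnormSq M ≤ mnormSq (mact g M) := by
  set G : Matrix (Fin D) (Fin D) ℂ := (↑g : Matrix (Fin D) (Fin D) ℂ) with hGdef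
  have hP : (Gᴴ * G).IsHermitian := by
    rw [Matrix.IsHermitian, conjTranspose_mul, conjTranspose_conjTranspose]
  set u : Matrix (Fin D) (Fin D) ℂ := (hP.eigenvectorUnitary : Matrix (Fin D) (Fin D) ℂ)
    with hudef
  have humem := hP.eigenvectorUnitary.2
  have hu2 : uᴴ * u = 1 := by
    rw [← Matrix.star_eq_conjTranspose]; exact humem.1
  have hu1 : u * uᴴ = 1 := by
    rw [← Matrix.star_eq_conjTranspose]; exact humem.2
  set p : Fin D → ℝ := hP.eigenvalues with hpdef
  have hg : Gᴴ * G = u * diagonal (fun a => (p a : ℂ)) * uᴴ := by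
    rw [← Matrix.star_eq_conjTranspose]
    exact hP.spectral_theorem
  have hnn : ∀ a, 0 ≤ p a := fun a =>
    Matrix.eigenvalues_conjTranspose_mul_self_nonneg G a
  have hdet : Matrix.det (Gᴴ * G) ≠ 0 := by
    have hGu : IsUnit (Matrix.det G) := (Matrix.isUnit_iff_isUnit_det G).mp g.isUnit
    rw [Matrix.det_mul, Matrix.det_conjTranspose]
    exact mul_ne_zero (fun h => hGu.ne_zero (star_eq_zero.mp h)) hGu.ne_zero
  have hne : ∀ a, p a ≠ 0 := by
    intro a ha
    apply hdet
    rw [hP.det_eq_prod_eigenvalues]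
    refine Finset.prod_eq_zero (Finset.mem_univ a) ?_
    show ((p a : ℝ) : ℂ) = 0
    rw [ha, Complex.ofReal_zero]
  have hp : ∀ a, 0 < p a := fun a => lt_of_le_of_ne (hnn a) (Ne.symm (hne a))
  rw [key M g u hu1 hu2 p hne hg, mnormSq_unitary M u hu1 hu2]
  set N : Fin d → Matrix (Fin D) (Fin D) ℂ := fun i => uᴴ * M i * u with hNdef
  set c : Fin D → Fin D → ℝ := fun a b => ∑ i, ‖N i a b‖ ^ 2 with hcdef
  have hc : ∀ a b, 0 ≤ c a b :=
    fun a b => Finset.sum_nonneg fun i _ => sq_nonneg _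
  have hrc : ∀ a, (∑ b, c a b) = ∑ b, c b a := by
    intro a
    have hA : (∑ i, N i * (N i)ᴴ) = ∑ i, (N i)ᴴ * N i :=
      conj_sum_comm M u hu1 hu2 hiii
    have h := congrArg (fun B => (B a a).re) hA
    simpa only [row_sum_eq, col_sum_eq] using h
  have expand : ∑ a, ∑ b, (1 + (Real.log (p a) - Real.log (p b))) * c a b
      = ∑ a, ∑ b, c a b := by
    have e1 : ∀ a b, (1 + (Real.log (p a) - Real.log (p b))) * c a b
        = c a b + (Real.log (p a) * c a b - Real.log (p b) * c a b) := by intros; ring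
    simp only [e1]
    rw [show (∑ a, ∑ b, (c a b + (Real.log (p a) * c a b - Real.log (p b) * c a b)))
        = (∑ a, ∑ b, c a b) + ((∑ a, ∑ b, Real.log (p a) * c a b)
          - ∑ a, ∑ b, Real.log (p b) * c a b) from by
      simp only [Finset.sum_add_distrib, Finset.sum_sub_distrib]]
    have h1 : (∑ a, ∑ b, Real.log (p a) * c a b) = ∑ a, Real.log (p a) * ∑ b, c b a := by
      refine Finset.sum_congr rfl fun a _ => ?_
      rw [← Finset.mul_sum, hrc a]
    have h2 : (∑ a, ∑ b, Real.log (p b) * c a b) = ∑ b, Real.log (p b) * ∑ a, c a b := by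
      rw [Finset.sum_comm]
      exact Finset.sum_congr rfl fun b _ => (Finset.mul_sum _ _ _).symm
    rw [h1, h2]
    simp
  rw [← expand]
  refine Finset.sum_le_sum fun a _ => Finset.sum_le_sum fun b _ => ?_
  refine mul_le_mul_of_nonneg_right ?_ (hc a b)
  have hdivpos : 0 < p a / p b := div_pos (hp a) (hp b)
  have hlog := Real.log_le_sub_one_of_pos hdivpos
  rw [Real.log_div (hne a) (hne b)] at hlog
  linarith

lemma comm_of_sq_le (M : MPSTensor d D)
    (hii : ∀ g : GL (Fin D) ℂ, mnormSq M ≤ mnormSq (mact g M)) :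
    (∑ i, M i * (M i)ᴴ) = ∑ i, (M i)ᴴ * M i := by
  set A : Matrix (Fin D) (Fin D) ℂ := (∑ i, M i * (M i)ᴴ) - ∑ i, (M i)ᴴ * M i with hAdef
  have hAH : A.IsHermitian := by
    rw [Matrix.IsHermitian, hAdef, conjTranspose_sub, conjTranspose_sum, conjTranspose_sum]
    simp only [conjTranspose_mul, conjTranspose_conjTranspose]
  set u : Matrix (Fin D) (Fin D) ℂ := (hAH.eigenvectorUnitary : Matrix (Fin D) (Fin D) ℂ)
    with hudef
  have humem := hAH.eigenvectorUnitary.2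
  have hu2 : uᴴ * u = 1 := by
    rw [← Matrix.star_eq_conjTranspose]; exact humem.1
  have hu1 : u * uᴴ = 1 := by
    rw [← Matrix.star_eq_conjTranspose]; exact humem.2
  have hcol : ∀ Y : Matrix (Fin D) (Fin D) ℂ, uᴴ * (u * Y) = Y := by
    intro Y; rw [← Matrix.mul_assoc, hu2, Matrix.one_mul]
  have hcol2 : ∀ Y : Matrix (Fin D) (Fin D) ℂ, u * (uᴴ * Y) = Y := by
    intro Y; rw [← Matrix.mul_assoc, hu1, Matrix.one_mul]
  set μ : Fin D → ℝ := hAH.eigenvalues with hμdef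
  have hspec : A = u * diagonal (fun a => (μ a : ℂ)) * uᴴ := by
    rw [← Matrix.star_eq_conjTranspose]
    exact hAH.spectral_theorem
  -- conjugated tensor and entry weights
  set N : Fin d → Matrix (Fin D) (Fin D) ℂ := fun i => uᴴ * M i * u with hNdef
  set c : Fin D → Fin D → ℝ := fun a b => ∑ i, ‖N i a b‖ ^ 2 with hcdef
  -- N-sum difference is diagonal μ
  have hdiagA : (∑ i, N i * (N i)ᴴ) - (∑ i, (N i)ᴴ * N i)
      = diagonal (fun a => (μ a : ℂ)) := by
    have e1 : ∀ X : Matrix (Fin D) (Fin D) ℂ,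
        (uᴴ * X * u) * (uᴴ * X * u)ᴴ = uᴴ * (X * Xᴴ) * u := by
      intro X
      simp only [conjTranspose_mul, conjTranspose_conjTranspose, Matrix.mul_assoc, hcol, hcol2]
    have e3 : ∀ X : Matrix (Fin D) (Fin D) ℂ,
        (uᴴ * X * u)ᴴ * (uᴴ * X * u) = uᴴ * (Xᴴ * X) * u := by
      intro X
      simp only [conjTranspose_mul, conjTranspose_conjTranspose, Matrix.mul_assoc, hcol, hcol2]
    have e4 : (∑ i, N i * (N i)ᴴ) - (∑ i, (N i)ᴴ * N i) = uᴴ * A * u := by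
      simp only [hNdef, e1, e3, ← Finset.sum_mul, ← Finset.mul_sum, hAdef]
      rw [Matrix.mul_sub, Matrix.sub_mul]
    rw [e4, hspec]
    calc uᴴ * (u * diagonal (fun a => (μ a : ℂ)) * uᴴ) * u
        = uᴴ * (u * (diagonal (fun a => (μ a : ℂ)) * (uᴴ * u))) := by
          simp only [Matrix.mul_assoc]
      _ = diagonal (fun a => (μ a : ℂ)) := by
          rw [hu2, Matrix.mul_one, hcol]
  have hrel : ∀ a, (∑ b, c a b) - (∑ b, c b a) = μ a := by
    intro a
    have h := congrArg (fun B => (B a a).re) hdiagA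
    simp only [Matrix.sub_apply, Complex.sub_re] at h
    rw [row_sum_eq, col_sum_eq] at h
    rw [h]
    simp [Matrix.diagonal_apply_eq]
  have hc : ∀ a b, 0 ≤ c a b :=
    fun a b => Finset.sum_nonneg fun i _ => sq_nonneg _
  -- products of conjugated diagonals
  have hconjdiag : ∀ r s : Fin D → ℂ,
      (u * diagonal r * uᴴ) * (u * diagonal s * uᴴ)
        = u * diagonal (fun a => r a * s a) * uᴴ := by
    intro r s
    calc (u * diagonal r * uᴴ) * (u * diagonal s * uᴴ)
        = u * (diagonal r * (uᴴ * (u * (diagonal s * uᴴ)))) := by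
          simp only [Matrix.mul_assoc]
      _ = u * (diagonal r * (diagonal s * uᴴ)) := by rw [hcol]
      _ = _ := by
          rw [← Matrix.mul_assoc (diagonal r), diagonal_mul_diagonal, Matrix.mul_assoc]
  -- the gauge group element for time t
  have hinv : ∀ t : ℝ,
      (u * diagonal (fun a => (Real.exp (-(t * μ a)) : ℂ)) * uᴴ) *
      (u * diagonal (fun a => (Real.exp (t * μ a) : ℂ)) * uᴴ) = 1 := by
    intro t
    rw [hconjdiag]
    rw [show (fun a => (Real.exp (-(t * μ a)) : ℂ) * (Real.exp (t * μ a) : ℂ))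
        = fun _ => (1 : ℂ) from funext fun a => by
      rw [← Complex.ofReal_mul, ← Real.exp_add, neg_add_cancel, Real.exp_zero,
        Complex.ofReal_one]]
    rw [Matrix.diagonal_one, Matrix.mul_one, hu1]
  have hinv' : ∀ t : ℝ,
      (u * diagonal (fun a => (Real.exp (t * μ a) : ℂ)) * uᴴ) *
      (u * diagonal (fun a => (Real.exp (-(t * μ a)) : ℂ)) * uᴴ) = 1 := by
    intro t
    rw [hconjdiag]
    rw [show (fun a => (Real.exp (t * μ a) : ℂ) * (Real.exp (-(t * μ a)) : ℂ))
        = fun _ => (1 : ℂ) from funext fun a => by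
      rw [← Complex.ofReal_mul, ← Real.exp_add, add_neg_cancel, Real.exp_zero,
        Complex.ofReal_one]]
    rw [Matrix.diagonal_one, Matrix.mul_one, hu1]
  set gm : ℝ → GL (Fin D) ℂ := fun t =>
    ⟨u * diagonal (fun a => (Real.exp (-(t * μ a)) : ℂ)) * uᴴ,
     u * diagonal (fun a => (Real.exp (t * μ a) : ℂ)) * uᴴ,
     hinv t, hinv' t⟩ with hgmdef
  -- conjugate-transpose of the group element
  have hgconj : ∀ t : ℝ, ((gm t : Matrix (Fin D) (Fin D) ℂ))ᴴ
      = (gm t : Matrix (Fin D) (Fin D) ℂ) := by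
    intro t
    show (u * diagonal (fun a => (Real.exp (-(t * μ a)) : ℂ)) * uᴴ)ᴴ
        = u * diagonal (fun a => (Real.exp (-(t * μ a)) : ℂ)) * uᴴ
    rw [conjTranspose_mul, conjTranspose_mul, conjTranspose_conjTranspose,
      Matrix.diagonal_conjTranspose]
    rw [show (star (fun a => (Real.exp (-(t * μ a)) : ℂ)))
        = fun a => (Real.exp (-(t * μ a)) : ℂ) from funext fun a => Complex.conj_ofReal _]
    simp only [Matrix.mul_assoc]
  have hgsq : ∀ t : ℝ, ((gm t : Matrix (Fin D) (Fin D) ℂ))ᴴ * (gm t : Matrix (Fin D) (Fin D) ℂ)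
      = u * diagonal (fun a => ((Real.exp (-(t * μ a)) * Real.exp (-(t * μ a)) : ℝ) : ℂ)) * uᴴ := by
    intro t
    rw [hgconj]
    show (u * diagonal (fun a => (Real.exp (-(t * μ a)) : ℂ)) * uᴴ) *
        (u * diagonal (fun a => (Real.exp (-(t * μ a)) : ℂ)) * uᴴ) = _
    rw [hconjdiag, show (fun a => ((Real.exp (-(t * μ a)) * Real.exp (-(t * μ a)) : ℝ) : ℂ))
        = fun a => (Real.exp (-(t * μ a)) : ℂ) * (Real.exp (-(t * μ a)) : ℂ) from
      funext fun a => Complex.ofReal_mul _ _]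
  -- the function f
  set f : ℝ → ℝ := fun t => ∑ a, ∑ b, Real.exp ((2 * (μ b - μ a)) * t) * c a b with hfdef
  have hfval : ∀ t : ℝ, f t = mnormSq (mact (gm t) M) := by
    intro t
    rw [key M (gm t) u hu1 hu2
      (fun a => Real.exp (-(t * μ a)) * Real.exp (-(t * μ a)))
      (fun a => mul_ne_zero (Real.exp_ne_zero _) (Real.exp_ne_zero _)) (hgsq t)]
    refine Finset.sum_congr rfl fun a _ => Finset.sum_congr rfl fun b _ => ?_
    congr 1
    rw [← Real.exp_add, ← Real.exp_add, ← Real.exp_sub]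
    congr 1
    ring
  have hf0 : f 0 = mnormSq M := by
    rw [hfdef]
    simp only [mul_zero, Real.exp_zero, one_mul]
    exact (mnormSq_unitary M u hu1 hu2).symm
  have hmin : ∀ t, f 0 ≤ f t := by
    intro t
    rw [hf0, hfval t]
    exact hii (gm t)
  have hderiv : HasDerivAt f (∑ a, ∑ b, (2 * (μ b - μ a)) * c a b) 0 := by
    refine HasDerivAt.fun_sum fun a _ => HasDerivAt.fun_sum fun b _ => ?_
    have h0 : HasDerivAt (fun t : ℝ => (2 * (μ b - μ a)) * t) (2 * (μ b - μ a)) 0 := by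
      simpa using (hasDerivAt_id (0 : ℝ)).const_mul (2 * (μ b - μ a))
    have h1 := ((Real.hasDerivAt_exp ((2 * (μ b - μ a)) * 0)).comp 0 h0).mul_const (c a b)
    simpa [Function.comp] using h1
  have hd0 : (∑ a, ∑ b, (2 * (μ b - μ a)) * c a b) = 0 := by
    have hlm : IsLocalMin f 0 := Filter.Eventually.of_forall hmin
    exact hlm.hasDerivAt_eq_zero hderiv
  have halg : (∑ a, ∑ b, (2 * (μ b - μ a)) * c a b) = ∑ a, (-2) * μ a ^ 2 := by
    have e : ∀ a b, (2 * (μ b - μ a)) * c a b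
        = 2 * (μ b * c a b) - 2 * (μ a * c a b) := by intros; ring
    simp only [e, Finset.sum_sub_distrib]
    have h1 : (∑ a, ∑ b, 2 * (μ b * c a b)) = ∑ a, 2 * μ a * ∑ b, c b a := by
      rw [Finset.sum_comm]
      refine Finset.sum_congr rfl fun a _ => ?_
      rw [Finset.mul_sum]
      exact Finset.sum_congr rfl fun b _ => by ring
    have h2 : (∑ a, ∑ b, 2 * (μ a * c a b)) = ∑ a, 2 * μ a * ∑ b, c a b := by
      refine Finset.sum_congr rfl fun a _ => ?_
      rw [Finset.mul_sum]
      exact Finset.sum_congr rfl fun b _ => by ring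
    rw [h1, h2, ← Finset.sum_sub_distrib]
    refine Finset.sum_congr rfl fun a _ => ?_
    have := hrel a
    calc 2 * μ a * (∑ b, c b a) - 2 * μ a * (∑ b, c a b)
        = -(2 * μ a * ((∑ b, c a b) - (∑ b, c b a))) := by ring
      _ = (-2) * μ a ^ 2 := by rw [this]; ring
  have hsum0 : (∑ a, μ a ^ 2) = 0 := by
    have := halg ▸ hd0
    have h2 : (-2 : ℝ) * ∑ a, μ a ^ 2 = 0 := by
      rw [Finset.mul_sum]; exact this
    linarith
  have hzero : ∀ a, μ a = 0 := by
    intro a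
    have := (Finset.sum_eq_zero_iff_of_nonneg (fun b _ => sq_nonneg (μ b))).mp hsum0 a
      (Finset.mem_univ a)
    exact pow_eq_zero_iff (by norm_num) |>.mp this
  have hA0 : A = 0 := by
    rw [hspec, show (fun a => (μ a : ℂ)) = fun _ => (0 : ℂ) from funext fun a => by
      rw [hzero a, Complex.ofReal_zero]]
    simp
  have := sub_eq_zero.mp hA0
  exact this


lemma continuous_mnorm : Continuous (mnorm : MPSTensor d D → ℝ) := by
  apply Real.continuous_sqrt.comp
  unfold mnormSq
  refine continuous_finset_sum _ fun i _ => ?_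
  refine continuous_finset_sum _ fun a _ => ?_
  refine continuous_finset_sum _ fun b _ => ?_
  have hc : Continuous fun M : MPSTensor d D => M i a b :=
    (continuous_apply b).comp ((continuous_apply a).comp (continuous_apply i))
  exact hc.norm.pow 2

lemma mnorm_le_iff (X Y : MPSTensor d D) : mnorm X ≤ mnorm Y ↔ mnormSq X ≤ mnormSq Y := by
  rw [mnorm, mnorm, Real.sqrt_le_sqrt_iff]
  exact Finset.sum_nonneg fun i _ => Finset.sum_nonneg fun a _ =>
    Finset.sum_nonneg fun b _ => sq_nonneg _

lemma mact_one (M : MPSTensor d D) : mact (1 : GL (Fin D) ℂ) M = M := by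
  funext i
  simp [mact]


end MPS


open MPS

theorem mps_minimal_canonical_form_characterization
    (d D : ℕ) (hd : 0 < d) (hD : 0 < D) (M : MPSTensor d D) :
    (mnorm M = sInf {r : ℝ | ∃ S ∈ closure (orbit M), r = mnorm S} ↔
      ∀ g : GL (Fin D) ℂ, mnorm (mact g M) ≥ mnorm M) ∧
    (mnorm M = sInf {r : ℝ | ∃ S ∈ closure (orbit M), r = mnorm S} ↔
      (∑ i, M i * (M i)ᴴ) = ∑ i, (M i)ᴴ * M i) := by
  set T : Set ℝ := {r : ℝ | ∃ S ∈ closure (orbit M), r = mnorm S} with hT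
  have hMorbit : M ∈ orbit M := ⟨1, (mact_one M).symm⟩
  have hMcl : M ∈ closure (orbit M) := subset_closure hMorbit
  have hmemT : mnorm M ∈ T := ⟨M, hMcl, rfl⟩
  have hbdd : BddBelow T := by
    refine ⟨0, fun r hr => ?_⟩
    obtain ⟨S, _, rfl⟩ := hr
    exact Real.sqrt_nonneg _
  have h12 : (mnorm M = sInf T) ↔ ∀ g : GL (Fin D) ℂ, mnorm (mact g M) ≥ mnorm M := by
    constructor
    · intro h g
      have hmem : mnorm (mact g M) ∈ T := ⟨mact g M, subset_closure ⟨g, rfl⟩, rfl⟩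
      rw [ge_iff_le, h]
      exact csInf_le hbdd hmem
    · intro h
      refine le_antisymm ?_ (csInf_le hbdd hmemT)
      refine le_csInf ⟨mnorm M, hmemT⟩ ?_
      rintro r ⟨S, hS, rfl⟩
      have hclosed : IsClosed {S : MPSTensor d D | mnorm M ≤ mnorm S} :=
        isClosed_le continuous_const continuous_mnorm
      have hsub : orbit M ⊆ {S : MPSTensor d D | mnorm M ≤ mnorm S} := by
        rintro S' ⟨g, rfl⟩
        exact h g
      exact closure_minimal hsub hclosed hS
  have h23 : (∀ g : GL (Fin D) ℂ, mnorm (mact g M) ≥ mnorm M) ↔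
      (∑ i, M i * (M i)ᴴ) = ∑ i, (M i)ᴴ * M i := by
    constructor
    · intro h
      apply comm_of_sq_le
      intro g
      exact (mnorm_le_iff M (mact g M)).mp (h g)
    · intro h g
      exact (mnorm_le_iff M (mact g M)).mpr (sq_le_of_comm M h g)
  exact ⟨h12, h12.trans h23⟩
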